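/- The quotient ring $\mathcal{R}_\Theta := \mathbb{F}_2[X_1,X_2]/(X_1^2X_2 + X_1X_2^2,\; X_1^2 + X_2^2 + X_1X_2)$ is a 6-dimensional vector space over the two-element field $\mathbb{F}_2$, with basis the residue classes of $1,\, X_1,\, X_2,\, X_1^2,\, X_1X_2,\, X_1^2X_2$. -/

import Mathlib

open MvPolynomial

noncomputable section

/-- The defining ideal of the mod-2 graph ring of the planar theta graph. -/
abbrev thetaIdealF : Ideal (MvPolynomial (Fin 2) (ZMod 2)) :=
  Ideal.span {X 0 ^ 2 * X 1 + X 0 * X 1 ^ 2, X 0 ^ 2 + X 1 ^ 2 + X 0 * X 1}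

/-- The graph ring `𝓡_Θ = 𝔽₂[X₁,X₂]/(X₁²X₂ + X₁X₂², X₁² + X₂² + X₁X₂)` of the
planar theta graph over the two-element field. -/
abbrev RThetaF := MvPolynomial (Fin 2) (ZMod 2) ⧸ thetaIdealF

namespace ThetaAux

/-- Multiplication-by-`x₀` matrix in the basis `1, x₀, x₁, x₀², x₀x₁, x₀²x₁`. -/
def M0 : Matrix (Fin 6) (Fin 6) (ZMod 2) :=
  !![0,0,0,0,0,0; 1,0,0,0,0,0; 0,0,0,0,0,0; 0,1,0,0,0,0; 0,0,1,0,0,0; 0,0,0,0,1,0]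

/-- Multiplication-by-`x₁` matrix in the basis `1, x₀, x₁, x₀², x₀x₁, x₀²x₁`. -/
def M1 : Matrix (Fin 6) (Fin 6) (ZMod 2) :=
  !![0,0,0,0,0,0; 0,0,0,0,0,0; 1,0,0,0,0,0; 0,0,1,0,0,0; 0,1,1,0,0,0; 0,0,0,1,1,0]

lemma hcomm : ∀ a ∈ ({M0, M1} : Set (Matrix (Fin 6) (Fin 6) (ZMod 2))),
    ∀ b ∈ ({M0, M1} : Set (Matrix (Fin 6) (Fin 6) (ZMod 2))), a * b = b * a := by
  rintro a (rfl | rfl) b (rfl | rfl) <;> decide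

/-- The (commutative) subalgebra of matrices generated by `M0` and `M1`. -/
abbrev AdjA : Subalgebra (ZMod 2) (Matrix (Fin 6) (Fin 6) (ZMod 2)) :=
  Algebra.adjoin (ZMod 2) ({M0, M1} : Set (Matrix (Fin 6) (Fin 6) (ZMod 2)))

noncomputable instance : CommRing AdjA := Algebra.adjoinCommRingOfComm (ZMod 2) hcomm

def m0 : AdjA := ⟨M0, Algebra.subset_adjoin (Set.mem_insert _ _)⟩
def m1 : AdjA := ⟨M1, Algebra.subset_adjoin (Set.mem_insert_of_mem _ rfl)⟩

/-- Evaluation of polynomials at `m0, m1`. -/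
def φ : MvPolynomial (Fin 2) (ZMod 2) →ₐ[ZMod 2] AdjA :=
  MvPolynomial.aeval ![m0, m1]

lemma ideal_le_ker : ∀ a ∈ thetaIdealF, φ a = 0 := by
  intro a ha
  refine Submodule.span_induction ?_ ?_ ?_ ?_ ha
  · rintro x (rfl | rfl) <;>
    · apply Subtype.ext
      simp only [φ, map_add, map_mul, map_pow, MvPolynomial.aeval_X,
        Matrix.cons_val_zero, Matrix.cons_val_one, Matrix.head_cons, m0, m1,
        MulMemClass.coe_mul, SubmonoidClass.coe_pow, AddMemClass.coe_add,
        ZeroMemClass.coe_zero]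
      decide
  · simp
  · intro x y _ _ hx hy; rw [map_add, hx, hy, add_zero]
  · intro x y _ hy; rw [smul_eq_mul, map_mul, hy, mul_zero]

/-- The induced algebra map on the quotient. -/
def ψ : RThetaF →ₐ[ZMod 2] AdjA :=
  Ideal.Quotient.liftₐ thetaIdealF φ ideal_le_ker

lemma ψ_mk (p : MvPolynomial (Fin 2) (ZMod 2)) :
    ψ (Ideal.Quotient.mk thetaIdealF p) = φ p := by
  simp [ψ, Ideal.Quotient.liftₐ_apply, Ideal.Quotient.lift_mk]
  exact Ideal.Quotient.lift_mk _ _ _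

/-- The candidate basis vectors. -/
def v : Fin 6 → RThetaF := fun i =>
  Ideal.Quotient.mk thetaIdealF (![1, X 0, X 1, X 0 ^ 2, X 0 * X 1, X 0 ^ 2 * X 1] i)

local notation "a" => Ideal.Quotient.mk thetaIdealF (X 0 : MvPolynomial (Fin 2) (ZMod 2))
local notation "b" => Ideal.Quotient.mk thetaIdealF (X 1 : MvPolynomial (Fin 2) (ZMod 2))

lemma h1 : a ^ 2 * b + a * b ^ 2 = 0 := by
  rw [← map_pow, ← map_pow, ← map_mul, ← map_mul, ← map_add,
    Ideal.Quotient.eq_zero_iff_mem]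
  exact Ideal.subset_span (Set.mem_insert _ _)

lemma h2 : a ^ 2 + b ^ 2 + a * b = 0 := by
  rw [← map_pow, ← map_pow, ← map_mul, ← map_add, ← map_add,
    Ideal.Quotient.eq_zero_iff_mem]
  exact Ideal.subset_span (Set.mem_insert_of_mem _ rfl)

lemma two_eq_zero : (2 : RThetaF) = 0 := by
  have h2 : (2 : ZMod 2) = 0 := rfl
  calc (2 : RThetaF) = algebraMap (ZMod 2) RThetaF 2 := by rw [map_ofNat]
    _ = 0 := by rw [h2, map_zero]

lemma hb2 : b ^ 2 = a ^ 2 + a * b := by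
  linear_combination h2 - (a ^ 2 + a * b) * two_eq_zero

lemma ha3 : a ^ 2 * a = 0 := by
  linear_combination a * h2 - h1

lemma ha3b : a ^ 2 * b * a = 0 := by
  linear_combination a * b * h2 - b * h1

lemma hab2 : a * b * b = a ^ 2 * b := by
  linear_combination h1 - a ^ 2 * b * two_eq_zero

lemma ha2b2 : a ^ 2 * b * b = 0 := by
  linear_combination a * hab2 + ha3b

/-- The span of the six monomial classes. -/
abbrev S : Submodule (ZMod 2) RThetaF := Submodule.span (ZMod 2) (Set.range v)

lemma mem_S (i : Fin 6) : v i ∈ S := Submodule.subset_span (Set.mem_range_self i)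

lemma hv0 : v 0 = 1 := by simp [v]
lemma hv1 : v 1 = a := rfl
lemma hv2 : v 2 = b := rfl
lemma hv3 : v 3 = a ^ 2 := by simp [v]
lemma hv4 : v 4 = a * b := by simp [v]
lemma hv5 : v 5 = a ^ 2 * b := by
  rw [show v 5 = Ideal.Quotient.mk thetaIdealF (X 0 ^ 2 * X 1) from rfl, map_mul, map_pow]

lemma closure (n : Fin 2) : ∀ x ∈ S, x * Ideal.Quotient.mk thetaIdealF (X n) ∈ S := by
  intro x hx
  refine Submodule.span_induction ?_ ?_ ?_ ?_ hx
  · rintro _ ⟨i, rfl⟩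
    fin_cases n <;> fin_cases i
    · show v 0 * Ideal.Quotient.mk thetaIdealF (X 0) ∈ S
      rw [hv0, one_mul, ← hv1]; exact mem_S 1
    · show v 1 * Ideal.Quotient.mk thetaIdealF (X 0) ∈ S
      rw [hv1, ← pow_two, ← hv3]; exact mem_S 3
    · show v 2 * Ideal.Quotient.mk thetaIdealF (X 0) ∈ S
      rw [hv2, show b * a = a * b by ring, ← hv4]; exact mem_S 4
    · show v 3 * Ideal.Quotient.mk thetaIdealF (X 0) ∈ S
      rw [hv3, ha3]; exact zero_mem S
    · show v 4 * Ideal.Quotient.mk thetaIdealF (X 0) ∈ S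
      rw [hv4, show a * b * a = a ^ 2 * b by ring, ← hv5]; exact mem_S 5
    · show v 5 * Ideal.Quotient.mk thetaIdealF (X 0) ∈ S
      rw [hv5, ha3b]; exact zero_mem S
    · show v 0 * Ideal.Quotient.mk thetaIdealF (X 1) ∈ S
      rw [hv0, one_mul, ← hv2]; exact mem_S 2
    · show v 1 * Ideal.Quotient.mk thetaIdealF (X 1) ∈ S
      rw [hv1, ← hv4]; exact mem_S 4
    · show v 2 * Ideal.Quotient.mk thetaIdealF (X 1) ∈ S
      rw [hv2, ← pow_two, hb2, ← hv3, ← hv4]; exact add_mem (mem_S 3) (mem_S 4)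
    · show v 3 * Ideal.Quotient.mk thetaIdealF (X 1) ∈ S
      rw [hv3, ← hv5]; exact mem_S 5
    · show v 4 * Ideal.Quotient.mk thetaIdealF (X 1) ∈ S
      rw [hv4, hab2, ← hv5]; exact mem_S 5
    · show v 5 * Ideal.Quotient.mk thetaIdealF (X 1) ∈ S
      rw [hv5, ha2b2]; exact zero_mem S
  · rw [zero_mul]; exact zero_mem S
  · intro p q _ _ hp hq; rw [add_mul]; exact add_mem hp hq
  · intro c p _ hp; rw [smul_mul_assoc]; exact Submodule.smul_mem S c hp

lemma span_eq_top : S = ⊤ := by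
  rw [eq_top_iff]
  rintro x -
  obtain ⟨p, rfl⟩ := Ideal.Quotient.mk_surjective x
  induction p using MvPolynomial.induction_on with
  | C r =>
    have hr : ∀ s : ZMod 2, s = 0 ∨ s = 1 := by decide
    rcases hr r with rfl | rfl
    · rw [map_zero, map_zero]; exact zero_mem S
    · rw [map_one, map_one, ← hv0]; exact mem_S 0
  | add p q hp hq => rw [map_add]; exact add_mem hp hq
  | mul_X p n hp => rw [map_mul]; exact closure n _ hp

lemma matrix_indep : ∀ g : Fin 6 → ZMod 2,
    g 0 • (1 : Matrix (Fin 6) (Fin 6) (ZMod 2)) + g 1 • M0 + g 2 • M1 +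
      g 3 • (M0 ^ 2) + g 4 • (M0 * M1) + g 5 • (M0 ^ 2 * M1) = 0 →
    ∀ i, g i = 0 := by decide

lemma coe_m (p : MvPolynomial (Fin 2) (ZMod 2)) :
    ((ψ (Ideal.Quotient.mk thetaIdealF p) : AdjA) : Matrix (Fin 6) (Fin 6) (ZMod 2)) =
      ((φ p : AdjA) : Matrix (Fin 6) (Fin 6) (ZMod 2)) := by rw [ψ_mk]

lemma ψv0 : ((ψ (v 0) : AdjA) : Matrix (Fin 6) (Fin 6) (ZMod 2)) = 1 := by
  rw [show v 0 = Ideal.Quotient.mk thetaIdealF 1 from rfl, coe_m]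
  simp [φ]

lemma ψv1 : ((ψ (v 1) : AdjA) : Matrix (Fin 6) (Fin 6) (ZMod 2)) = M0 := by
  rw [show v 1 = Ideal.Quotient.mk thetaIdealF (X 0) from rfl, coe_m]
  simp [φ, m0]

lemma ψv2 : ((ψ (v 2) : AdjA) : Matrix (Fin 6) (Fin 6) (ZMod 2)) = M1 := by
  rw [show v 2 = Ideal.Quotient.mk thetaIdealF (X 1) from rfl, coe_m]
  simp [φ, m1]

lemma ψv3 : ((ψ (v 3) : AdjA) : Matrix (Fin 6) (Fin 6) (ZMod 2)) = M0 ^ 2 := by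
  rw [show v 3 = Ideal.Quotient.mk thetaIdealF (X 0 ^ 2) from rfl, coe_m]
  simp [φ, m0]

lemma ψv4 : ((ψ (v 4) : AdjA) : Matrix (Fin 6) (Fin 6) (ZMod 2)) = M0 * M1 := by
  rw [show v 4 = Ideal.Quotient.mk thetaIdealF (X 0 * X 1) from rfl, coe_m]
  simp [φ, m0, m1]

lemma ψv5 : ((ψ (v 5) : AdjA) : Matrix (Fin 6) (Fin 6) (ZMod 2)) = M0 ^ 2 * M1 := by
  rw [show v 5 = Ideal.Quotient.mk thetaIdealF (X 0 ^ 2 * X 1) from rfl, coe_m]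
  simp [φ, m0, m1]

lemma indep : LinearIndependent (ZMod 2) v := by
  rw [Fintype.linearIndependent_iff]
  intro g hg
  have hψ : ψ (∑ i, g i • v i) = 0 := by rw [hg, map_zero]
  rw [map_sum] at hψ
  simp only [map_smul] at hψ
  have hg' : ∑ i, g i • ((ψ (v i) : AdjA) : Matrix (Fin 6) (Fin 6) (ZMod 2)) = 0 := by
    have := congrArg (Subtype.val) hψ
    rw [AddSubmonoidClass.coe_finset_sum] at this
    simpa [SetLike.val_smul] using this
  rw [Fin.sum_univ_six, ψv0, ψv1, ψv2, ψv3, ψv4, ψv5] at hg'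
  exact matrix_indep g hg'

end ThetaAux

/-- `𝓡_Θ` is a 6-dimensional `𝔽₂`-vector space, with basis the residue classes of
the monomials `1, X₁, X₂, X₁², X₁X₂, X₁²X₂`. -/
theorem RThetaF_dim_six :
    Module.finrank (ZMod 2) RThetaF = 6 ∧
    ∃ B : Module.Basis (Fin 6) (ZMod 2) RThetaF, ∀ i : Fin 6,
      B i = Ideal.Quotient.mk thetaIdealF
        (![1, X 0, X 1, X 0 ^ 2, X 0 * X 1, X 0 ^ 2 * X 1] i) := by
  have hspan : ⊤ ≤ Submodule.span (ZMod 2) (Set.range ThetaAux.v) :=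
    ThetaAux.span_eq_top.ge
  let B : Module.Basis (Fin 6) (ZMod 2) RThetaF := Module.Basis.mk ThetaAux.indep hspan
  constructor
  · rw [Module.finrank_eq_card_basis B, Fintype.card_fin]
  · exact ⟨B, fun i => Module.Basis.mk_apply _ _ i⟩

end
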